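/- Let Γ be a locally finite connected graph with Floyd scaling function f. Any two distinct points p, q ∈ ∂_f Γ can be joined by a bi-infinite geodesic line γ : ℤ → Γ, i.e. an isometric embedding of ℤ into Γ with γ(n) → p and γ(−n) → q in the Floyd metric as n → ∞. -/

import Mathlib

open Filter Topology

/-- The vertex set of a locally finite connected graph, presented via its
graph metric `d` (an integer-valued geodesic metric with finite balls). -/
structure GraphDist (V : Type) where
  d : V → V → ℕ
  d_self : ∀ x, d x x = 0
  eq_of_d : ∀ x y, d x y = 0 → x = y
  d_symm : ∀ x y, d x y = d y x
  d_tri : ∀ x y z, d x z ≤ d x y + d y z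
  locallyFinite : ∀ (x : V) (n : ℕ), {y | d x y ≤ n}.Finite
  geodesic : ∀ x y, 0 < d x y → ∃ z, d x z = 1 ∧ d z y + 1 = d x y

namespace GraphDist

variable {V : Type} (G : GraphDist V)

/-- `γ : Fin (n+1) → V` is an edge path (consecutive vertices at distance `≤ 1`). -/
def IsPath {n : ℕ} (γ : Fin (n + 1) → V) : Prop :=
  ∀ i : Fin n, G.d (γ i.castSucc) (γ i.succ) ≤ 1

/-- Floyd length of a path with respect to the scaling function `f` and
basepoint `v`: the edge `{x,y}` has length `f (d v {x,y})`. -/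
def floydLen (f : ℕ → ℝ) (v : V) {n : ℕ} (γ : Fin (n + 1) → V) : ℝ :=
  ∑ i : Fin n, f (min (G.d v (γ i.castSucc)) (G.d v (γ i.succ)))

/-- Floyd distance: infimal Floyd length of edge paths joining two vertices. -/
noncomputable def floydDist (f : ℕ → ℝ) (v : V) (a b : V) : ℝ :=
  sInf {L | ∃ (n : ℕ) (γ : Fin (n + 1) → V), G.IsPath γ ∧ γ 0 = a ∧
    γ (Fin.last n) = b ∧ L = G.floydLen f v γ}

/-- A finite `c`-quasigeodesic path. -/
def IsQuasigeodesic (c : ℝ) {n : ℕ} (γ : Fin (n + 1) → V) : Prop :=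
  G.IsPath γ ∧ ∀ s t : Fin (n + 1),
    (1 / c) * |(s : ℝ) - (t : ℝ)| - c ≤ (G.d (γ s) (γ t) : ℝ) ∧
    (G.d (γ s) (γ t) : ℝ) ≤ c * |(s : ℝ) - (t : ℝ)| + c

/-- A `c`-quasigeodesic ray. -/
def IsQuasigeodesicRay (c : ℝ) (γ : ℕ → V) : Prop :=
  (∀ n : ℕ, G.d (γ n) (γ (n + 1)) ≤ 1) ∧ ∀ s t : ℕ,
    (1 / c) * |(s : ℝ) - (t : ℝ)| - c ≤ (G.d (γ s) (γ t) : ℝ) ∧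
    (G.d (γ s) (γ t) : ℝ) ≤ c * |(s : ℝ) - (t : ℝ)| + c

/-- A finite `α`-distorted (`α`-geodesic) path. -/
def IsAlphaPath (α : ℕ → ℝ) {n : ℕ} (γ : Fin (n + 1) → V) : Prop :=
  G.IsPath γ ∧ ∀ s t : Fin (n + 1),
    (G.d (γ s) (γ t) : ℝ) ≤ α (Nat.dist s t) ∧
    (Nat.dist (s : ℕ) (t : ℕ) : ℝ) ≤ α (G.d (γ s) (γ t))

/-- An `α`-geodesic ray. -/
def IsAlphaRay (α : ℕ → ℝ) (γ : ℕ → V) : Prop :=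
  (∀ n : ℕ, G.d (γ n) (γ (n + 1)) ≤ 1) ∧ ∀ s t : ℕ,
    (G.d (γ s) (γ t) : ℝ) ≤ α (Nat.dist s t) ∧
    (Nat.dist s t : ℝ) ≤ α (G.d (γ s) (γ t))

end GraphDist

/-- `f` is a Floyd scaling function with ratio constant `K`. -/
def IsFloydFunction (f : ℕ → ℝ) (K : ℝ) : Prop :=
  (∀ n, 0 < f n) ∧ (∀ n, 1 ≤ f n / f (n + 1) ∧ f n / f (n + 1) ≤ K) ∧ Summable f

/-- `α` is a distortion function: non-decreasing with `α n ≥ n`. -/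
def IsDistortion (α : ℕ → ℝ) : Prop :=
  (∀ n, 0 < α n) ∧ Monotone α ∧ ∀ n : ℕ, (n : ℝ) ≤ α n
namespace GraphDist

variable {V : Type} (G : GraphDist V)

lemma exists_geo_aux : ∀ (n : ℕ) (x y : V), G.d x y = n →
    ∃ σ : ℕ → V, σ 0 = x ∧ σ n = y ∧
      ∀ s t, s ≤ n → t ≤ n → G.d (σ s) (σ t) = Nat.dist s t := by
  intro n
  induction n with
  | zero =>
    intro x y h
    refine ⟨fun _ => x, rfl, (G.eq_of_d x y h) ▸ rfl, ?_⟩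
    intro s t hs ht
    have hs0 : s = 0 := Nat.le_zero.mp hs
    have ht0 : t = 0 := Nat.le_zero.mp ht
    subst hs0; subst ht0
    simp [G.d_self, Nat.dist]
  | succ n ih =>
    intro x y h
    obtain ⟨z, hz1, hz2⟩ := G.geodesic x y (by omega)
    have hzy : G.d z y = n := by omega
    obtain ⟨σ', h0, hN, hgeo⟩ := ih z y hzy
    have key : ∀ t', t' ≤ n → G.d x (σ' t') = t' + 1 := by
      intro t' ht'
      have e1 : G.d z (σ' t') = t' := by
        have := hgeo 0 t' (Nat.zero_le _) ht'
        rw [h0] at this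
        simpa [Nat.dist] using this
      have le1 : G.d x (σ' t') ≤ 1 + t' := by
        have := G.d_tri x z (σ' t'); omega
      have e2 : G.d (σ' t') y = n - t' := by
        have := hgeo t' n ht' le_rfl
        rw [hN] at this
        rw [this]; simp [Nat.dist]; omega
      have ge1 : G.d x y ≤ G.d x (σ' t') + G.d (σ' t') y := G.d_tri _ _ _
      omega
    refine ⟨fun i => match i with | 0 => x | Nat.succ j => σ' j, rfl, ?_, ?_⟩
    · exact hN
    · intro s t hs ht
      match s, t with
      | 0, 0 => simp [G.d_self, Nat.dist]
      | 0, Nat.succ t' =>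
        show G.d x (σ' t') = Nat.dist 0 (t' + 1)
        rw [key t' (by omega)]
        simp [Nat.dist]
      | Nat.succ s', 0 =>
        show G.d (σ' s') x = Nat.dist (s' + 1) 0
        rw [G.d_symm, key s' (by omega)]
        simp [Nat.dist]
      | Nat.succ s', Nat.succ t' =>
        show G.d (σ' s') (σ' t') = Nat.dist (s' + 1) (t' + 1)
        rw [hgeo s' t' (by omega) (by omega)]
        simp [Nat.dist]

lemma exists_geo (x y : V) :
    ∃ σ : ℕ → V, σ 0 = x ∧ σ (G.d x y) = y ∧
      ∀ s t, s ≤ G.d x y → t ≤ G.d x y → G.d (σ s) (σ t) = Nat.dist s t :=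
  G.exists_geo_aux (G.d x y) x y rfl

variable {f : ℕ → ℝ} {v : V}

lemma floydSet_bddBelow (hf0 : ∀ n, 0 < f n) (a b : V) :
    BddBelow {L | ∃ (n : ℕ) (γ : Fin (n + 1) → V), G.IsPath γ ∧ γ 0 = a ∧
      γ (Fin.last n) = b ∧ L = G.floydLen f v γ} := by
  refine ⟨0, fun L hL => ?_⟩
  obtain ⟨n, γ, _, _, _, rfl⟩ := hL
  exact Finset.sum_nonneg fun i _ => (hf0 _).le

lemma floydDist_nonneg (hf0 : ∀ n, 0 < f n) (a b : V) :
    0 ≤ G.floydDist f v a b := by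
  apply Real.sInf_nonneg
  rintro x ⟨n, γ, _, _, _, rfl⟩
  exact Finset.sum_nonneg fun i _ => (hf0 _).le

lemma floydDist_le_sum (hf0 : ∀ n, 0 < f n) (σ : ℕ → V) (N : ℕ)
    (hp : ∀ i < N, G.d (σ i) (σ (i + 1)) ≤ 1) :
    G.floydDist f v (σ 0) (σ N) ≤
      ∑ i ∈ Finset.range N, f (min (G.d v (σ i)) (G.d v (σ (i + 1)))) := by
  apply csInf_le (G.floydSet_bddBelow hf0 _ _)
  refine ⟨N, fun i => σ i.val, ?_, rfl, by simp, ?_⟩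
  · intro i
    simpa using hp i i.isLt
  · unfold floydLen
    rw [← Fin.sum_univ_eq_sum_range (fun i => f (min (G.d v (σ i)) (G.d v (σ (i + 1))))) N]
    apply Finset.sum_congr rfl
    intro i _
    simp

lemma floydSet_nonempty (a b : V) :
    Set.Nonempty {L | ∃ (n : ℕ) (γ : Fin (n + 1) → V), G.IsPath γ ∧ γ 0 = a ∧
      γ (Fin.last n) = b ∧ L = G.floydLen f v γ} := by
  obtain ⟨σ, h0, hN, hgeo⟩ := G.exists_geo a b
  refine ⟨G.floydLen f v (fun i : Fin (G.d a b + 1) => σ i.val), G.d a b,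
    fun i => σ i.val, ?_, ?_, ?_, rfl⟩
  · intro i
    have := hgeo i.val (i.val + 1) (by omega) (by have := i.isLt; omega)
    show G.d (σ (i.castSucc : Fin (G.d a b + 1)).val) (σ (i.succ : Fin (G.d a b + 1)).val) ≤ 1
    simp only [Fin.coe_castSucc, Fin.val_succ]
    rw [this]
    simp [Nat.dist]
  · show σ ((0 : Fin (G.d a b + 1)).val) = a
    simpa using h0
  · show σ ((Fin.last (G.d a b)).val) = b
    simpa using hN

lemma mem_to_natpath {a b : V} {L : ℝ}
    (hL : L ∈ {L | ∃ (n : ℕ) (γ : Fin (n + 1) → V), G.IsPath γ ∧ γ 0 = a ∧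
      γ (Fin.last n) = b ∧ L = G.floydLen f v γ}) :
    ∃ (N : ℕ) (σ : ℕ → V), (∀ i < N, G.d (σ i) (σ (i + 1)) ≤ 1) ∧ σ 0 = a ∧ σ N = b ∧
      L = ∑ i ∈ Finset.range N, f (min (G.d v (σ i)) (G.d v (σ (i + 1)))) := by
  obtain ⟨n, γ, hpath, h0, hl, rfl⟩ := hL
  have hlt : ∀ i : ℕ, min i n < n + 1 := fun i => by omega
  refine ⟨n, fun i => γ ⟨min i n, hlt i⟩, ?_, ?_, ?_, ?_⟩
  · intro i hi
    show G.d (γ ⟨min i n, hlt i⟩) (γ ⟨min (i + 1) n, hlt (i + 1)⟩) ≤ 1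
    have e1 : (⟨min i n, hlt i⟩ : Fin (n + 1)) = (⟨i, hi⟩ : Fin n).castSucc :=
      Fin.ext (by simp; omega)
    have e2 : (⟨min (i + 1) n, hlt (i + 1)⟩ : Fin (n + 1)) = (⟨i, hi⟩ : Fin n).succ :=
      Fin.ext (by simp; omega)
    rw [e1, e2]
    exact hpath ⟨i, hi⟩
  · show γ ⟨min 0 n, hlt 0⟩ = a
    rw [← h0]
    congr 1
  · show γ ⟨min n n, hlt n⟩ = b
    rw [← hl]
    congr 1
    exact Fin.ext (by simp [Fin.last])
  · show G.floydLen f v γ =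
      ∑ i ∈ Finset.range n, f (min (G.d v (γ ⟨min i n, hlt i⟩)) (G.d v (γ ⟨min (i + 1) n, hlt (i + 1)⟩)))
    rw [← Fin.sum_univ_eq_sum_range
      (fun i => f (min (G.d v (γ ⟨min i n, hlt i⟩)) (G.d v (γ ⟨min (i + 1) n, hlt (i + 1)⟩)))) n]
    apply Finset.sum_congr rfl
    intro i _
    have e1 : (⟨min (i : ℕ) n, hlt i⟩ : Fin (n + 1)) = i.castSucc :=
      Fin.ext (by simp [Nat.min_eq_left i.isLt.le])
    have e2 : (⟨min ((i : ℕ) + 1) n, hlt ((i : ℕ) + 1)⟩ : Fin (n + 1)) = i.succ :=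
      Fin.ext (by simp [Nat.min_eq_left i.isLt])
    rw [e1, e2]

end GraphDist
namespace GraphDist

variable {V : Type} (G : GraphDist V) {f : ℕ → ℝ} {v : V}

lemma floydDist_triangle (hf0 : ∀ n, 0 < f n) (a b c : V) :
    G.floydDist f v a c ≤ G.floydDist f v a b + G.floydDist f v b c := by
  apply le_of_forall_pos_le_add
  intro ε hε
  obtain ⟨L1, hL1mem, hL1⟩ := Real.lt_sInf_add_pos (G.floydSet_nonempty (f := f) (v := v) a b)
    (half_pos hε)
  obtain ⟨L2, hL2mem, hL2⟩ := Real.lt_sInf_add_pos (G.floydSet_nonempty (f := f) (v := v) b c)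
    (half_pos hε)
  obtain ⟨N1, σ1, hp1, h10, h1N, hs1⟩ := G.mem_to_natpath hL1mem
  obtain ⟨N2, σ2, hp2, h20, h2N, hs2⟩ := G.mem_to_natpath hL2mem
  set σ : ℕ → V := fun i => if i ≤ N1 then σ1 i else σ2 (i - N1) with hσ
  have hjoin : σ1 N1 = σ2 0 := by rw [h1N, h20]
  have hup : ∀ i, N1 ≤ i → σ i = σ2 (i - N1) := by
    intro i hi
    rcases Nat.eq_or_lt_of_le hi with h | h
    · simp [hσ, ← h, hjoin]
    · simp [hσ, if_neg (by omega : ¬ i ≤ N1)]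
  have hlow : ∀ i, i ≤ N1 → σ i = σ1 i := fun i hi => by simp [hσ, if_pos hi]
  have hpath : ∀ i < N1 + N2, G.d (σ i) (σ (i + 1)) ≤ 1 := by
    intro i hi
    rcases lt_or_ge i N1 with h | h
    · rw [hlow i (by omega), hlow (i + 1) (by omega)]
      exact hp1 i h
    · rw [hup i h, hup (i + 1) (by omega)]
      have : i + 1 - N1 = (i - N1) + 1 := by omega
      rw [this]
      exact hp2 (i - N1) (by omega)
  have h0 : σ 0 = a := by rw [hlow 0 (Nat.zero_le _), h10]
  have hN : σ (N1 + N2) = c := by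
    rw [hup (N1 + N2) (by omega)]
    simpa using h2N
  have hsum : ∑ i ∈ Finset.range (N1 + N2), f (min (G.d v (σ i)) (G.d v (σ (i + 1))))
      = L1 + L2 := by
    rw [Finset.range_eq_Ico, ← Finset.sum_Ico_consecutive _ (Nat.zero_le N1) (by omega : N1 ≤ N1 + N2)]
    congr 1
    · rw [← Finset.range_eq_Ico, hs1]
      apply Finset.sum_congr rfl
      intro i hi
      have hi' := Finset.mem_range.mp hi
      rw [hlow i (by omega), hlow (i + 1) (by omega)]
    · rw [Finset.sum_Ico_eq_sum_range, hs2]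
      have : N1 + N2 - N1 = N2 := by omega
      rw [this]
      apply Finset.sum_congr rfl
      intro i hi
      have hi' := Finset.mem_range.mp hi
      rw [hup (N1 + i) (by omega), hup (N1 + i + 1) (by omega)]
      have e1 : N1 + i - N1 = i := by omega
      have e2 : N1 + i + 1 - N1 = i + 1 := by omega
      rw [e1, e2]
  have := G.floydDist_le_sum (f := f) (v := v) hf0 σ (N1 + N2) hpath
  rw [h0, hN, hsum] at this
  calc G.floydDist f v a c ≤ L1 + L2 := this
    _ ≤ _ := by
        unfold floydDist
        linarith

end GraphDist
lemma sum_div4_le (g : ℕ → ℝ) (hg : ∀ i, 0 ≤ g i) (hsum : Summable g) (M : ℕ) :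
    ∑ t ∈ Finset.range M, g (t / 4) ≤ 4 * ∑' u, g u := by
  have key : ∀ M : ℕ, ∑ t ∈ Finset.range (4 * M), g (t / 4) = 4 * ∑ u ∈ Finset.range M, g u := by
    intro M
    induction M with
    | zero => simp
    | succ M ih =>
      have h4 : 4 * (M + 1) = (4 * M) + 1 + 1 + 1 + 1 := by ring
      rw [h4, Finset.sum_range_succ, Finset.sum_range_succ, Finset.sum_range_succ,
        Finset.sum_range_succ, ih, Finset.sum_range_succ]
      have e1 : 4 * M / 4 = M := by omega
      have e2 : (4 * M + 1) / 4 = M := by omega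
      have e3 : (4 * M + 1 + 1) / 4 = M := by omega
      have e4 : (4 * M + 1 + 1 + 1) / 4 = M := by omega
      rw [e1, e2, e3, e4]
      ring
  calc ∑ t ∈ Finset.range M, g (t / 4)
      ≤ ∑ t ∈ Finset.range (4 * M), g (t / 4) := by
        apply Finset.sum_le_sum_of_subset_of_nonneg
        · intro i hi
          simp only [Finset.mem_range] at *
          omega
        · exact fun i _ _ => hg _
    _ = 4 * ∑ u ∈ Finset.range M, g u := key M
    _ ≤ 4 * ∑' u, g u := by
        have := Summable.sum_le_tsum (Finset.range M) (fun i _ => hg i) hsum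
        linarith

namespace GraphDist

variable {V : Type} (G : GraphDist V) {f : ℕ → ℝ} {v : V}

lemma karlsson (hf0 : ∀ n, 0 < f n) (hfa : Antitone f) (hfs : Summable f)
    (σ : ℕ → V) (L : ℕ)
    (hgeo : ∀ s t, s ≤ L → t ≤ L → G.d (σ s) (σ t) = Nat.dist s t)
    (R : ℕ) (havoid : ∀ j, j ≤ L → R < G.d v (σ j)) :
    ∑ i ∈ Finset.range L, f (min (G.d v (σ i)) (G.d v (σ (i + 1)))) ≤
      8 * ∑' u, f (u + R / 2) := by
  have hsum' : Summable (fun u => f (u + R / 2)) := (summable_nat_add_iff (R / 2)).mpr hfs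
  have hg0 : ∀ i, (0:ℝ) ≤ f (i + R / 2) := fun i => (hf0 _).le
  obtain ⟨j0, hj0mem, hj0min⟩ := Finset.exists_min_image (Finset.range (L + 1))
    (fun j => G.d v (σ j)) ⟨0, by simp⟩
  have hj0L : j0 ≤ L := by
    have := Finset.mem_range.mp hj0mem; omega
  set D := G.d v (σ j0) with hD
  have hDR : R < D := havoid j0 hj0L
  have hedge : ∀ i, i < L →
      (if j0 ≤ i then i - j0 else j0 - i - 1) / 4 + R / 2 ≤
        min (G.d v (σ i)) (G.d v (σ (i + 1))) := by
    intro i hi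
    have h1 : D ≤ G.d v (σ i) := hj0min i (Finset.mem_range.mpr (by omega))
    have h2 : D ≤ G.d v (σ (i + 1)) := hj0min (i + 1) (Finset.mem_range.mpr (by omega))
    have h3 : Nat.dist i j0 ≤ G.d v (σ i) + D := by
      have ht := G.d_tri (σ i) v (σ j0)
      rw [G.d_symm (σ i) v] at ht
      have := hgeo i j0 (by omega) hj0L
      omega
    have h4 : Nat.dist (i + 1) j0 ≤ G.d v (σ (i + 1)) + D := by
      have ht := G.d_tri (σ (i + 1)) v (σ j0)
      rw [G.d_symm (σ (i + 1)) v] at ht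
      have := hgeo (i + 1) j0 (by omega) hj0L
      omega
    simp only [Nat.dist] at h3 h4
    rcases le_total (G.d v (σ i)) (G.d v (σ (i + 1))) with h | h
    · rw [min_eq_left h]; split <;> omega
    · rw [min_eq_right h]; split <;> omega
  calc ∑ i ∈ Finset.range L, f (min (G.d v (σ i)) (G.d v (σ (i + 1))))
      ≤ ∑ i ∈ Finset.range L,
          f ((if j0 ≤ i then i - j0 else j0 - i - 1) / 4 + R / 2) := by
        apply Finset.sum_le_sum
        intro i hi
        exact hfa (hedge i (Finset.mem_range.mp hi))
    _ ≤ 8 * ∑' u, f (u + R / 2) := by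
        rw [Finset.range_eq_Ico, ← Finset.sum_Ico_consecutive _ (Nat.zero_le j0)
          (hj0L : j0 ≤ L)]
        have part1 : ∑ i ∈ Finset.Ico 0 j0,
            f ((if j0 ≤ i then i - j0 else j0 - i - 1) / 4 + R / 2) ≤
            4 * ∑' u, f (u + R / 2) := by
          rw [← Finset.range_eq_Ico]
          have : ∀ i ∈ Finset.range j0,
              f ((if j0 ≤ i then i - j0 else j0 - i - 1) / 4 + R / 2)
              = f ((j0 - 1 - i) / 4 + R / 2) := by
            intro i hi
            have := Finset.mem_range.mp hi
            rw [if_neg (by omega)]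
            congr 2
            omega
          rw [Finset.sum_congr rfl this,
            Finset.sum_range_reflect (fun t => f (t / 4 + R / 2)) j0]
          exact sum_div4_le (fun u => f (u + R / 2)) hg0 hsum' j0
        have part2 : ∑ i ∈ Finset.Ico j0 L,
            f ((if j0 ≤ i then i - j0 else j0 - i - 1) / 4 + R / 2) ≤
            4 * ∑' u, f (u + R / 2) := by
          rw [Finset.sum_Ico_eq_sum_range]
          have : ∀ i ∈ Finset.range (L - j0),
              f ((if j0 ≤ j0 + i then j0 + i - j0 else j0 - (j0 + i) - 1) / 4 + R / 2)
              = f (i / 4 + R / 2) := by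
            intro i hi
            rw [if_pos (by omega)]
            congr 2
            omega
          rw [Finset.sum_congr rfl this]
          exact sum_div4_le (fun u => f (u + R / 2)) hg0 hsum' (L - j0)
        linarith

end GraphDist

/-- any two distinct points `p ≠ q` of the Floyd boundary
(represented by escaping Floyd-Cauchy sequences of vertices defining distinct
boundary points) are joined by a bi-infinite geodesic line `γ : ℤ → V`, with
`γ n → p` and `γ (-n) → q` in the Floyd metric. -/
theorem stmt8 {V : Type} (G : GraphDist V) (v : V)
    (f : ℕ → ℝ) (K : ℝ) (hK : 0 < K) (hf : IsFloydFunction f K)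
    (p q : ℕ → V)
    (hpCauchy : ∀ ε : ℝ, 0 < ε → ∃ N : ℕ, ∀ m : ℕ, N ≤ m → ∀ n : ℕ, N ≤ n →
      G.floydDist f v (p m) (p n) < ε)
    (hqCauchy : ∀ ε : ℝ, 0 < ε → ∃ N : ℕ, ∀ m : ℕ, N ≤ m → ∀ n : ℕ, N ≤ n →
      G.floydDist f v (q m) (q n) < ε)
    (hpEsc : Tendsto (fun n => G.d v (p n)) atTop atTop)
    (hqEsc : Tendsto (fun n => G.d v (q n)) atTop atTop)
    (hpq : ¬ Tendsto (fun n => G.floydDist f v (p n) (q n)) atTop (nhds 0)) :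
    ∃ γ : ℤ → V, (∀ s t : ℤ, (G.d (γ s) (γ t) : ℤ) = |s - t|) ∧
      Tendsto (fun n : ℕ => G.floydDist f v (γ (n : ℤ)) (p n)) atTop (nhds 0) ∧
      Tendsto (fun n : ℕ => G.floydDist f v (γ (-(n : ℤ))) (q n)) atTop (nhds 0) := by
  classical
  obtain ⟨hf0, hfK, hfs⟩ := hf
  have hfa : Antitone f :=
    antitone_nat_of_succ_le (fun n => (one_le_div (hf0 (n + 1))).mp (hfK n).1)
  set T : ℕ → ℝ := fun k => ∑' u, f (u + k) with hT
  have hTtend : Tendsto T atTop (nhds 0) := tendsto_sum_nat_add f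
  have hTsummable : ∀ k, Summable (fun u => f (u + k)) :=
    fun k => (summable_nat_add_iff k).mpr hfs
  -- extract ε
  obtain ⟨ε, hε, hfreq⟩ : ∃ ε > (0:ℝ), ∀ N, ∃ n ≥ N, ε ≤ G.floydDist f v (p n) (q n) := by
    rw [Metric.tendsto_atTop] at hpq
    push_neg at hpq
    obtain ⟨ε, hε, h⟩ := hpq
    refine ⟨ε, hε, fun N => ?_⟩
    obtain ⟨n, hn, h2⟩ := h N
    refine ⟨n, hn, ?_⟩
    rwa [Real.dist_eq, sub_zero, abs_of_nonneg (G.floydDist_nonneg hf0 _ _)] at h2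
  obtain ⟨M0, hM0⟩ : ∃ M0, T M0 < ε / 8 :=
    (hTtend.eventually_lt_const (show (0:ℝ) < ε / 8 by positivity)).exists
  set R0 : ℕ := 2 * M0 with hR0
  have hR0div : R0 / 2 = M0 := by omega
  -- geodesics from p n to q n
  have hgeo_all := fun n : ℕ => G.exists_geo (p n) (q n)
  choose σ hσ0 hσN hσgeo using hgeo_all
  have hσpath : ∀ n, ∀ i < (G.d (p n) (q n)), G.d (σ n i) (σ n (i + 1)) ≤ 1 := by
    intro n i hi
    rw [hσgeo n i (i + 1) (by omega) (by omega)]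
    simp [Nat.dist]
  set S : Set ℕ := {n | ε ≤ G.floydDist f v (p n) (q n)} with hS
  -- Karlsson: geodesics meet the ball of radius R0
  have hmeet : ∀ n ∈ S, ∃ j, j ≤ (G.d (p n) (q n)) ∧ G.d v (σ n j) ≤ R0 := by
    intro n hn
    by_contra hcon
    push_neg at hcon
    have havoid : ∀ j, j ≤ (G.d (p n) (q n)) → R0 < G.d v (σ n j) := fun j hj => hcon j hj
    have h1 := G.karlsson hf0 hfa hfs (σ n) ((G.d (p n) (q n))) (hσgeo n) R0 havoid
    have h2 := G.floydDist_le_sum (f := f) (v := v) hf0 (σ n) ((G.d (p n) (q n))) (hσpath n)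
    rw [hσ0 n, hσN n] at h2
    rw [hR0div] at h1
    have hnS : ε ≤ G.floydDist f v (p n) (q n) := hn
    have : (8:ℝ) * T M0 < ε := by linarith
    have := h2.trans h1
    linarith
  set tt : ℕ → ℕ := fun n =>
    if h : ∃ j, j ≤ (G.d (p n) (q n)) ∧ G.d v (σ n j) ≤ R0 then h.choose else 0 with htt
  have httprop : ∀ n ∈ S, tt n ≤ (G.d (p n) (q n)) ∧ G.d v (σ n (tt n)) ≤ R0 := by
    intro n hn
    have h := hmeet n hn
    simp only [htt, dif_pos h]
    exact h.choose_spec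
  -- ultrafilter
  have hNeBot : (atTop ⊓ 𝓟 S).NeBot := by
    rw [← frequently_iff_neBot, frequently_atTop]
    exact fun a => (hfreq a).imp (fun n hn => ⟨hn.1, hn.2⟩)
  set U : Ultrafilter ℕ := Ultrafilter.of (atTop ⊓ 𝓟 S) with hU
  have hUle : (U : Filter ℕ) ≤ atTop ⊓ 𝓟 S := Ultrafilter.of_le _
  have hUtop : (U : Filter ℕ) ≤ atTop := hUle.trans inf_le_left
  have hUS : ∀ᶠ n in (U : Filter ℕ), n ∈ S :=
    hUle (mem_inf_of_right (mem_principal_self S))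
  have hatTop : ∀ {P : ℕ → Prop}, (∀ᶠ n in atTop, P n) → ∀ᶠ n in (U : Filter ℕ), P n :=
    fun h => h.filter_mono hUtop
  -- index validity events
  have hidx : ∀ s : ℤ, ∀ᶠ n in (U : Filter ℕ), n ∈ S ∧ s.natAbs ≤ tt n ∧
      tt n + s.natAbs ≤ (G.d (p n) (q n)) ∧ G.d v (σ n (tt n)) ≤ R0 ∧ tt n ≤ (G.d (p n) (q n)) := by
    intro s
    filter_upwards [hUS, hatTop (hpEsc.eventually_ge_atTop (s.natAbs + R0)),
      hatTop (hqEsc.eventually_ge_atTop (s.natAbs + R0))] with n hnS hp' hq'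
    obtain ⟨htL, htB⟩ := httprop n hnS
    have h1 : G.d v (p n) ≤ R0 + tt n := by
      have ht := G.d_tri v (σ n 0) (σ n (tt n))
      have e := hσgeo n 0 (tt n) (by omega) htL
      have ht2 := G.d_tri v (σ n (tt n)) (σ n 0)
      have e2 := hσgeo n (tt n) 0 htL (by omega)
      rw [e2] at ht2
      rw [hσ0 n] at ht2
      simp only [Nat.dist] at ht2
      omega
    have h2 : G.d v (q n) ≤ R0 + ((G.d (p n) (q n)) - tt n) := by
      have ht2 := G.d_tri v (σ n (tt n)) (σ n ((G.d (p n) (q n))))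
      have e2 := hσgeo n (tt n) ((G.d (p n) (q n))) htL le_rfl
      rw [e2] at ht2
      rw [hσN n] at ht2
      simp only [Nat.dist] at ht2
      omega
    exact ⟨hnS, by omega, by omega, htB, htL⟩
  set xx : ℤ → ℕ → V := fun s n => σ n ((tt n - s : ℤ)).toNat with hxx
  -- ultrafilter limit
  have hval : ∀ s : ℤ, ∃ y : V, ∀ᶠ n in (U : Filter ℕ), xx s n = y := by
    intro s
    have hin : ∀ᶠ n in (U : Filter ℕ), xx s n ∈ {y | G.d v y ≤ R0 + s.natAbs} := by
      filter_upwards [hidx s] with n hn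
      obtain ⟨hnS, h1, h2, h3, h4⟩ := hn
      simp only [hxx, Set.mem_setOf_eq]
      set j := ((tt n : ℤ) - s).toNat with hj
      have hjle : j ≤ (G.d (p n) (q n)) := by omega
      have e := hσgeo n (tt n) j h4 hjle
      have htri := G.d_tri v (σ n (tt n)) (σ n j)
      rw [e] at htri
      simp only [Nat.dist] at htri
      omega
    have hfin : {y | G.d v y ≤ R0 + s.natAbs}.Finite := G.locallyFinite v _
    have hmem : {y | G.d v y ≤ R0 + s.natAbs} ∈ U.map (xx s) := hin
    obtain ⟨y, _, hpure⟩ := Ultrafilter.eq_pure_of_finite_mem hfin hmem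
    refine ⟨y, ?_⟩
    have h1 : {y} ∈ U.map (xx s) := by
      rw [hpure]; exact Filter.mem_pure.mpr rfl
    have h2 : (xx s) ⁻¹' {y} ∈ (U : Filter ℕ) := h1
    filter_upwards [h2] with n hn
    exact hn
  choose γ0 hγ0 using hval
  refine ⟨γ0, ?_, ?_, ?_⟩
  · -- geodesic property
    intro s u
    obtain ⟨n, hs', hu', hsi, hui⟩ :=
      ((hγ0 s).and ((hγ0 u).and ((hidx s).and (hidx u)))).exists
    obtain ⟨_, hs1, hs2, _, hsL⟩ := hsi
    obtain ⟨_, hu1, hu2, _, _⟩ := hui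
    rw [← hs', ← hu']
    simp only [hxx]
    set is := ((tt n : ℤ) - s).toNat with his
    set iu := ((tt n : ℤ) - u).toNat with hiu
    have hisL : is ≤ (G.d (p n) (q n)) := by omega
    have hiuL : iu ≤ (G.d (p n) (q n)) := by omega
    rw [hσgeo n is iu hisL hiuL, Int.abs_eq_natAbs]
    simp only [Nat.dist]
    omega
  · -- convergence to p
    rw [Metric.tendsto_atTop]
    intro ε' hε'
    obtain ⟨Nc, hNc⟩ := hpCauchy (ε' / 2) (by positivity)
    obtain ⟨M1, hM1⟩ : ∃ M1, ∀ k ≥ M1, T k < ε' / 2 := by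
      have := hTtend.eventually_lt_const (show (0:ℝ) < ε' / 2 by positivity)
      rwa [eventually_atTop] at this
    refine ⟨Nc + M1 + R0, fun m hm => ?_⟩
    obtain ⟨n, hn1, hni, hnNc⟩ :=
      ((hγ0 (m : ℤ)).and ((hidx (m : ℤ)).and (hatTop (eventually_ge_atTop Nc)))).exists
    obtain ⟨hnS, ht1, ht2, htB, htL⟩ := hni
    set j0 := ((tt n : ℤ) - (m : ℤ)).toNat with hj0
    have hj0t : j0 + m = tt n := by omega
    have hτp : ∀ i < j0, G.d (σ n (j0 - i)) (σ n (j0 - (i + 1))) ≤ 1 := by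
      intro i hi
      rw [hσgeo n (j0 - i) (j0 - (i + 1)) (by omega) (by omega)]
      simp only [Nat.dist]
      omega
    have hbound := G.floydDist_le_sum (f := f) (v := v) hf0 (fun i => σ n (j0 - i)) j0 hτp
    simp only [Nat.sub_zero, Nat.sub_self] at hbound
    rw [hσ0 n] at hbound
    have hend : xx (m : ℤ) n = σ n j0 := by
      simp only [hxx]; rfl
    rw [hend] at hn1
    rw [hn1] at hbound
    -- term bounds
    have hdist : ∀ i, i ≤ j0 → m + i ≤ G.d v (σ n (j0 - i)) + R0 := by
      intro i hi
      have e := hσgeo n (tt n) (j0 - i) htL (by omega)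
      have ht := G.d_tri (σ n (tt n)) v (σ n (j0 - i))
      rw [G.d_symm (σ n (tt n)) v, e] at ht
      simp only [Nat.dist] at ht
      have hj' : j0 + m = tt n := hj0t
      have he1 : tt n - (j0 - i) = m + i := by omega
      have he2 : j0 - i - tt n = 0 := by omega
      rw [he1, he2] at ht
      omega
    have hterm : ∀ i ∈ Finset.range j0,
        f (min (G.d v (σ n (j0 - i))) (G.d v (σ n (j0 - (i + 1))))) ≤ f (i + (m - R0)) := by
      intro i hi
      have hi' := Finset.mem_range.mp hi
      apply hfa
      have d1 := hdist i (by omega)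
      have d2 := hdist (i + 1) (by omega)
      have hmR : R0 ≤ m := by omega
      rcases le_total (G.d v (σ n (j0 - i))) (G.d v (σ n (j0 - (i + 1)))) with h | h
      · rw [min_eq_left h]; omega
      · rw [min_eq_right h]; omega
    have hsum2 : ∑ i ∈ Finset.range j0, f (i + (m - R0)) ≤ T (m - R0) :=
      Summable.sum_le_tsum _ (fun i _ => (hf0 _).le) (hTsummable (m - R0))
    have hγp : G.floydDist f v (γ0 (m : ℤ)) (p n) ≤ T (m - R0) := by
      calc G.floydDist f v (γ0 (m : ℤ)) (p n)
          ≤ ∑ i ∈ Finset.range j0,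
              f (min (G.d v (σ n (j0 - i))) (G.d v (σ n (j0 - (i + 1))))) := hbound
        _ ≤ ∑ i ∈ Finset.range j0, f (i + (m - R0)) := Finset.sum_le_sum hterm
        _ ≤ T (m - R0) := hsum2
    have htri := G.floydDist_triangle (f := f) (v := v) hf0 (γ0 (m : ℤ)) (p n) (p m)
    have hcau := hNc n hnNc m (by omega)
    have hTm : T (m - R0) < ε' / 2 := hM1 (m - R0) (by omega)
    have hnonneg := G.floydDist_nonneg (f := f) (v := v) hf0 (γ0 (m : ℤ)) (p m)
    rw [Real.dist_eq, sub_zero, abs_of_nonneg hnonneg]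
    have hpc : G.floydDist f v (p n) (p m) < ε' / 2 := hcau
    linarith
  · -- convergence to q
    rw [Metric.tendsto_atTop]
    intro ε' hε'
    obtain ⟨Nc, hNc⟩ := hqCauchy (ε' / 2) (by positivity)
    obtain ⟨M1, hM1⟩ : ∃ M1, ∀ k ≥ M1, T k < ε' / 2 := by
      have := hTtend.eventually_lt_const (show (0:ℝ) < ε' / 2 by positivity)
      rwa [eventually_atTop] at this
    refine ⟨Nc + M1 + R0, fun m hm => ?_⟩
    obtain ⟨n, hn1, hni, hnNc⟩ :=
      ((hγ0 (-(m : ℤ))).and ((hidx (-(m : ℤ))).and (hatTop (eventually_ge_atTop Nc)))).exists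
    obtain ⟨hnS, ht1, ht2, htB, htL⟩ := hni
    have hnat : (-(m : ℤ)).natAbs = m := by omega
    rw [hnat] at ht1 ht2
    set N2 := (G.d (p n) (q n)) - (tt n + m) with hN2
    have hτp : ∀ i < N2, G.d (σ n (tt n + m + i)) (σ n (tt n + m + (i + 1))) ≤ 1 := by
      intro i hi
      rw [hσgeo n (tt n + m + i) (tt n + m + (i + 1)) (by omega) (by omega)]
      simp only [Nat.dist]
      omega
    have hbound := G.floydDist_le_sum (f := f) (v := v) hf0
      (fun i => σ n (tt n + m + i)) N2 hτp
    simp only [Nat.add_zero] at hbound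
    have hLN : tt n + m + N2 = (G.d (p n) (q n)) := by omega
    rw [hLN, hσN n] at hbound
    have hend : xx (-(m : ℤ)) n = σ n (tt n + m) := by
      simp only [hxx]
      congr 1
      omega
    rw [hend] at hn1
    rw [hn1] at hbound
    have hdist : ∀ i, tt n + m + i ≤ (G.d (p n) (q n)) → m + i ≤ G.d v (σ n (tt n + m + i)) + R0 := by
      intro i hi
      have e := hσgeo n (tt n) (tt n + m + i) htL hi
      have ht := G.d_tri (σ n (tt n)) v (σ n (tt n + m + i))
      rw [G.d_symm (σ n (tt n)) v, e] at ht
      simp only [Nat.dist] at ht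
      have he1 : tt n + m + i - tt n = m + i := by omega
      have he2 : tt n - (tt n + m + i) = 0 := by omega
      rw [he1, he2] at ht
      omega
    have hterm : ∀ i ∈ Finset.range N2,
        f (min (G.d v (σ n (tt n + m + i))) (G.d v (σ n (tt n + m + (i + 1))))) ≤
          f (i + (m - R0)) := by
      intro i hi
      have hi' := Finset.mem_range.mp hi
      apply hfa
      have d1 := hdist i (by omega)
      have d2 := hdist (i + 1) (by omega)
      have hmR : R0 ≤ m := by omega
      rcases le_total (G.d v (σ n (tt n + m + i))) (G.d v (σ n (tt n + m + (i + 1)))) with h | h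
      · rw [min_eq_left h]; omega
      · rw [min_eq_right h]; omega
    have hsum2 : ∑ i ∈ Finset.range N2, f (i + (m - R0)) ≤ T (m - R0) :=
      Summable.sum_le_tsum _ (fun i _ => (hf0 _).le) (hTsummable (m - R0))
    have hγq : G.floydDist f v (γ0 (-(m : ℤ))) (q n) ≤ T (m - R0) := by
      calc G.floydDist f v (γ0 (-(m : ℤ))) (q n)
          ≤ ∑ i ∈ Finset.range N2,
              f (min (G.d v (σ n (tt n + m + i))) (G.d v (σ n (tt n + m + (i + 1))))) := hbound
        _ ≤ ∑ i ∈ Finset.range N2, f (i + (m - R0)) := Finset.sum_le_sum hterm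
        _ ≤ T (m - R0) := hsum2
    have htri := G.floydDist_triangle (f := f) (v := v) hf0 (γ0 (-(m : ℤ))) (q n) (q m)
    have hcau := hNc n hnNc m (by omega)
    have hTm : T (m - R0) < ε' / 2 := hM1 (m - R0) (by omega)
    have hnonneg := G.floydDist_nonneg (f := f) (v := v) hf0 (γ0 (-(m : ℤ))) (q m)
    rw [Real.dist_eq, sub_zero, abs_of_nonneg hnonneg]
    linarith
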